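/- Let d₁, d₂ ∈ ℂ^N be unit vectors, let r = |⟨d₁, d₂⟩| and let q ∈ [0, 1]. Then every unit vector z ∈ ℂ^N with |⟨d₁, z⟩|² = q satisfies |⟨d₂, z⟩|² ≤ 1 − (r√(1−q) − √((1−r²)q))². -/

import Mathlib

set_option maxHeartbeats 1000000 in
/-- For unit vectors `d₁, d₂ ∈ ℂ^N`, `r = |⟨d₁, d₂⟩|` and `q ∈ [0,1]`,
every unit vector `z` with `|⟨d₁, z⟩|² = q` satisfies
`|⟨d₂, z⟩|² ≤ 1 − (r√(1−q) − √((1−r²)q))²`. -/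
theorem stmt3 {N : ℕ} (d₁ d₂ : EuclideanSpace ℂ (Fin N))
    (hd₁ : ‖d₁‖ = 1) (hd₂ : ‖d₂‖ = 1)
    (r : ℝ) (hr : r = ‖(inner ℂ d₁ d₂ : ℂ)‖)
    (q : ℝ) (hq0 : 0 ≤ q) (hq1 : q ≤ 1)
    (z : EuclideanSpace ℂ (Fin N)) (hz : ‖z‖ = 1)
    (hzq : ‖(inner ℂ d₁ z : ℂ)‖ ^ 2 = q) :
    ‖(inner ℂ d₂ z : ℂ)‖ ^ 2 ≤
      1 - (r * Real.sqrt (1 - q) - Real.sqrt ((1 - r ^ 2) * q)) ^ 2 := by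
  set c : ℂ := inner ℂ d₁ d₂ with hc
  set a : ℂ := inner ℂ d₁ z with ha
  set w : EuclideanSpace ℂ (Fin N) := d₂ - c • d₁ with hw
  set u : EuclideanSpace ℂ (Fin N) := z - a • d₁ with hu
  have hd11 : (inner ℂ d₁ d₁ : ℂ) = 1 := by
    rw [inner_self_eq_norm_sq_to_K, hd₁]; norm_num
  have hd1w : (inner ℂ d₁ w : ℂ) = 0 := by
    simp [hw, inner_sub_right, inner_smul_right, hd11, hd₁, ← hc]
  have hwd1 : (inner ℂ w d₁ : ℂ) = 0 := by
    rw [← inner_conj_symm, hd1w]; simp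
  have hd1u : (inner ℂ d₁ u : ℂ) = 0 := by
    simp [hu, inner_sub_right, inner_smul_right, hd11, hd₁, ← ha]
  have hud1 : (inner ℂ u d₁ : ℂ) = 0 := by
    rw [← inner_conj_symm, hd1u]; simp
  have hr0 : 0 ≤ r := hr ▸ norm_nonneg _
  have hr1 : r ≤ 1 := by
    rw [hr]
    calc ‖(inner ℂ d₁ d₂ : ℂ)‖ ≤ ‖d₁‖ * ‖d₂‖ := norm_inner_le_norm _ _
    _ = 1 := by rw [hd₁, hd₂]; ring
  have habs : ‖a‖ = Real.sqrt q := by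
    rw [← hzq, Real.sqrt_sq (norm_nonneg _)]
  have hcabs : ‖c‖ = r := hr.symm
  have hnw : ‖w‖ ^ 2 = 1 - r ^ 2 := by
    have h1 : (inner ℂ w w : ℂ) = ((1 - r^2 : ℝ) : ℂ) := by
      have h0 : (inner ℂ w w : ℂ) = inner ℂ d₂ d₂ - (starRingEnd ℂ) c * c := by
        simp only [hw, inner_sub_left, inner_sub_right, inner_smul_left,
          inner_smul_right, hd11, ← hc]
        rw [← inner_conj_symm d₂ d₁, ← hc]
        ring
      rw [h0, inner_self_eq_norm_sq_to_K, hd₂, Complex.conj_mul',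
        hcabs]
      push_cast
      ring
    have h2 := inner_self_eq_norm_sq_to_K (𝕜 := ℂ) w
    rw [h1] at h2
    rw [← RCLike.ofReal_pow] at h2
    exact RCLike.ofReal_inj.mp h2.symm
  have hnu : ‖u‖ ^ 2 = 1 - q := by
    have h1 : (inner ℂ u u : ℂ) = ((1 - q : ℝ) : ℂ) := by
      have h0 : (inner ℂ u u : ℂ) = inner ℂ z z - (starRingEnd ℂ) a * a := by
        simp only [hu, inner_sub_left, inner_sub_right, inner_smul_left,
          inner_smul_right, hd11, ← ha]
        rw [← inner_conj_symm z d₁, ← ha]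
        ring
      rw [h0, inner_self_eq_norm_sq_to_K, hz, Complex.conj_mul']
      have h3 : ((1:ℝ)^2 - ‖a‖ ^ 2 : ℝ) = 1 - q := by rw [hzq]; ring
      exact_mod_cast h3
    have h2 := inner_self_eq_norm_sq_to_K (𝕜 := ℂ) u
    rw [h1] at h2
    rw [← RCLike.ofReal_pow] at h2
    exact RCLike.ofReal_inj.mp h2.symm
  have hnw' : ‖w‖ = Real.sqrt (1 - r^2) := by
    rw [← hnw, Real.sqrt_sq (norm_nonneg _)]
  have hnu' : ‖u‖ = Real.sqrt (1 - q) := by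
    rw [← hnu, Real.sqrt_sq (norm_nonneg _)]
  have hdec : (inner ℂ d₂ z : ℂ) = (starRingEnd ℂ) c * a + inner ℂ w u := by
    have hd2 : d₂ = c • d₁ + w := by rw [hw]; abel
    have hz' : z = a • d₁ + u := by rw [hu]; abel
    rw [hd2, hz']
    simp only [inner_add_left, inner_add_right, inner_smul_left,
      inner_smul_right, hd11, hwd1, hd1u, ← ha]
    ring
  have key : ‖(inner ℂ d₂ z : ℂ)‖ ≤
      r * Real.sqrt q + Real.sqrt (1 - r^2) * Real.sqrt (1 - q) := by
    rw [hdec]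
    calc ‖((starRingEnd ℂ) c * a + inner ℂ w u)‖
        ≤ ‖((starRingEnd ℂ) c * a)‖ + ‖(inner ℂ w u : ℂ)‖ :=
          norm_add_le _ _
      _ ≤ r * Real.sqrt q + Real.sqrt (1 - r^2) * Real.sqrt (1 - q) := by
          gcongr
          · rw [norm_mul, Complex.norm_conj, hcabs, habs]
          · rw [← hnw', ← hnu']
            exact norm_inner_le_norm _ _
  have hs : Real.sqrt ((1 - r^2) * q) = Real.sqrt (1 - r^2) * Real.sqrt q := by
    rw [Real.sqrt_mul (by nlinarith)]
  have hq' : Real.sqrt q ^ 2 = q := Real.sq_sqrt hq0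
  have hq'' : Real.sqrt (1 - q) ^ 2 = 1 - q := Real.sq_sqrt (by linarith)
  have hr' : Real.sqrt (1 - r^2) ^ 2 = 1 - r^2 := Real.sq_sqrt (by nlinarith)
  have hA2 : ‖(inner ℂ d₂ z : ℂ)‖ ^ 2 ≤
      (r * Real.sqrt q + Real.sqrt (1 - r^2) * Real.sqrt (1 - q)) ^ 2 :=
    pow_le_pow_left₀ (norm_nonneg _) key 2
  rw [hs]
  nlinarith [hA2, hq', hq'', hr']
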